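/- Every non-erasing monoid homomorphism f : Δ* → Σ* between finitely generated free monoids factors as a composition of homomorphisms each of which either maps generators to generators, or maps one generator to a word of length two and fixes all other generators. -/
import Mathlib

open FreeMonoid

/-- A homomorphism of free monoids mapping each generator to a generator. -/
def IsLetterToLetter {α β : Type} (f : FreeMonoid α →* FreeMonoid β) : Prop :=
  ∀ a : α, ∃ b : β, f (of a) = of b

/-- A homomorphism of free monoids mapping one generator to a word of length two and all
other generators injectively to (copies of) themselves among the generators. -/
def IsDoubling {α β : Type} (f : FreeMonoid α →* FreeMonoid β) : Prop :=
  ∃ (a₀ : α) (b₁ b₂ : β), f (of a₀) = of b₁ * of b₂ ∧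
    ∃ g : α → β, Function.Injective g ∧ ∀ a : α, a ≠ a₀ → f (of a) = of (g a)

/-- The homomorphisms of free monoids on finite alphabets obtained by composing
letter-to-letter homomorphisms and doublings (through finitely many intermediate free
monoids on finite alphabets). -/
inductive Factorable : ∀ {α β : Type} [Fintype α] [Fintype β],
    (FreeMonoid α →* FreeMonoid β) → Prop
  | letter {α β : Type} [Fintype α] [Fintype β] {f : FreeMonoid α →* FreeMonoid β} :
      IsLetterToLetter f → Factorable f
  | doubling {α β : Type} [Fintype α] [Fintype β] {f : FreeMonoid α →* FreeMonoid β} :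
      IsDoubling f → Factorable f
  | comp {α β γ : Type} [Fintype α] [Fintype β] [Fintype γ]
      {f : FreeMonoid α →* FreeMonoid β} {g : FreeMonoid β →* FreeMonoid γ} :
      Factorable f → Factorable g → Factorable (g.comp f)

theorem factorable_aux (n : ℕ) : ∀ {Δ Sg : Type} [Fintype Δ] [Fintype Sg]
    (f : FreeMonoid Δ →* FreeMonoid Sg), (∀ d : Δ, f (of d) ≠ 1) →
    (∑ d : Δ, ((f (of d)).length - 1)) ≤ n → Factorable f := by
  induction n with
  | zero =>
    intro Δ Sg _ _ f hf hn
    apply Factorable.letter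
    intro d
    rw [← FreeMonoid.length_eq_one]
    have h1 : 1 ≤ (f (of d)).length := by
      rcases Nat.eq_zero_or_pos (f (of d)).length with h | h
      · exact absurd (FreeMonoid.length_eq_zero.mp h) (hf d)
      · exact h
    have h2 : (f (of d)).length - 1 = 0 :=
      Nat.le_zero.mp (le_trans (Finset.single_le_sum (f := fun d => ((f (of d)).length - 1))
        (fun _ _ => Nat.zero_le _) (Finset.mem_univ d)) hn)
    omega
  | succ n ih =>
    intro Δ Sg _ _ f hf hn
    by_cases hall : ∀ d : Δ, (f (of d)).length = 1
    · exact Factorable.letter fun d => FreeMonoid.length_eq_one.mp (hall d)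
    push_neg at hall
    obtain ⟨d₀, hd₀⟩ := hall
    classical
    have hlen : 2 ≤ (f (of d₀)).length := by
      have h1 : 1 ≤ (f (of d₀)).length := by
        rcases Nat.eq_zero_or_pos (f (of d₀)).length with h | h
        · exact absurd (FreeMonoid.length_eq_zero.mp h) (hf d₀)
        · exact h
      omega
    obtain ⟨a, w, haw⟩ : ∃ a w, (f (of d₀)).toList = a :: w := by
      cases h : (f (of d₀)).toList with
      | nil =>
        exfalso
        have : (f (of d₀)).length = 0 := by
          simpa [FreeMonoid.length] using congrArg List.length h
        omega
      | cons a w => exact ⟨a, w, rfl⟩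
    have hfd₀ : f (of d₀) = of a * ofList w := by
      rw [← FreeMonoid.ofList_cons, ← haw]; rfl
    have hlenw : (f (of d₀)).length = w.length + 1 := by
      simpa [FreeMonoid.length] using congrArg List.length haw
    have hwlen : 1 ≤ w.length := by omega
    set h : FreeMonoid Δ →* FreeMonoid (Δ ⊕ Unit) :=
      FreeMonoid.lift (fun d => if d = d₀ then of (Sum.inl d₀) * of (Sum.inr ())
        else of (Sum.inl d)) with hh
    set g' : FreeMonoid (Δ ⊕ Unit) →* FreeMonoid Sg :=
      FreeMonoid.lift (fun x => match x with
        | Sum.inl d => if d = d₀ then of a else f (of d)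
        | Sum.inr _ => ofList w) with hg'
    have hcomp : f = g'.comp h := by
      apply FreeMonoid.hom_eq
      intro d
      by_cases hd : d = d₀
      · subst hd
        simp [hh, hg', hfd₀]
      · simp only [MonoidHom.comp_apply, hh, hg', FreeMonoid.lift_eval_of, if_neg hd]
    rw [hcomp]
    refine Factorable.comp (Factorable.doubling ?_) (ih g' ?_ ?_)
    · exact ⟨d₀, Sum.inl d₀, Sum.inr (), by simp [hh], Sum.inl, Sum.inl_injective,
        fun d hd => by simp [hh, hd]⟩
    · rintro (d | u)
      · by_cases hd : d = d₀
        · subst hd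
          simp only [hg', FreeMonoid.lift_eval_of, if_pos rfl]
          exact FreeMonoid.of_ne_one a
        · simpa only [hg', FreeMonoid.lift_eval_of, if_neg hd] using hf d
      · simp only [hg', FreeMonoid.lift_eval_of]
        intro hw
        have hw' : w = [] := congrArg FreeMonoid.toList hw
        simp [hw'] at hwlen
    · have key : ∑ x : Δ ⊕ Unit, ((g' (of x)).length - 1)
          = (∑ d ∈ Finset.univ.erase d₀, ((f (of d)).length - 1)) + (w.length - 1) := by
        rw [Fintype.sum_sum_type]
        congr 1
        have e0 : (g' (of (Sum.inl d₀))).length - 1 = 0 := by simp [hg']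
        rw [← Finset.add_sum_erase _ (fun d => ((g' (of (Sum.inl d))).length - 1))
          (Finset.mem_univ d₀), e0, zero_add]
        refine Finset.sum_congr rfl fun d hd => ?_
        have hd' : d ≠ d₀ := Finset.ne_of_mem_erase hd
        simp [hg', hd']
      have key2 : ((f (of d₀)).length - 1) +
          (∑ d ∈ Finset.univ.erase d₀, ((f (of d)).length - 1))
          = ∑ d : Δ, ((f (of d)).length - 1) := by
        exact Finset.add_sum_erase Finset.univ (fun d => ((f (of d)).length - 1))
          (Finset.mem_univ d₀)
      rw [key]
      omega

/-- Every non-erasing homomorphism between free monoids on finite alphabets factors as a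
composition of homomorphisms, each of which either maps generators to generators or maps
one generator to a word of length two and fixes all other generators. -/
theorem factorization_of_nonErasing {Δ Sg : Type} [Fintype Δ] [Fintype Sg]
    (f : FreeMonoid Δ →* FreeMonoid Sg) (hf : ∀ d : Δ, f (of d) ≠ 1) :
    Factorable f := by
  exact factorable_aux (∑ d : Δ, ((f (of d)).length - 1)) f hf le_rfl
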